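/- Let π : S → T be an onto homomorphism of finite semigroups such that π⁻¹(e) is an aperiodic subsemigroup of S for every idempotent e of T, and let K be a J-class of T which is a subsemigroup of T. Then there is a subsemigroup K' of S such that the restriction of π to K' is an isomorphism from K' onto K. -/

import Mathlib

set_option autoImplicit false

/-! ### General notions: topological semigroups, pseudovarieties, pro-V semigroups -/

/-- Continuity of a map into a type regarded with the discrete topology. -/
def ContinuousDisc {S : Type} [TopologicalSpace S] {T : Type} (f : S → T) : Prop :=
  @Continuous S T _ ⊥ f

/-- A pseudovariety of semigroups: a class of finite semigroups closed under
homomorphic images, subsemigroups and finite direct products. -/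
structure Pseudovariety : Type 1 where
  Mem : ∀ (S : Type) [Semigroup S], Prop
  finite : ∀ (S : Type) [Semigroup S], Mem S → Finite S
  closed_hom : ∀ (S T : Type) [Semigroup S] [Semigroup T] (f : S →ₙ* T),
    Mem S → Function.Surjective f → Mem T
  closed_sub : ∀ (S T : Type) [Semigroup S] [Semigroup T] (f : T →ₙ* S),
    Mem S → Function.Injective f → Mem T
  closed_prod : ∀ (ι : Type) [Finite ι] (S : ι → Type) [∀ i, Semigroup (S i)],
    (∀ i, Mem (S i)) → Mem (∀ i, S i)

/-- A bundled member of a pseudovariety `V` (a finite semigroup belonging to `V`),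
always regarded as carrying the discrete topology. -/
structure SgrIn (V : Pseudovariety) : Type 1 where
  carrier : Type
  [str : Semigroup carrier]
  mem : V.Mem carrier

attribute [instance] SgrIn.str

/-- A (bundled) topological semigroup. -/
structure TopSgr : Type 1 where
  carrier : Type
  [str : Semigroup carrier]
  [top : TopologicalSpace carrier]

attribute [instance] TopSgr.str TopSgr.top

/-- A finite semigroup regarded as a topological semigroup with the discrete topology. -/
def discTopSgr (S : Type) [Semigroup S] : TopSgr :=
  @TopSgr.mk S _ ⊥

/-- A pro-V semigroup: a compact Hausdorff topological semigroup that is residually `V`. -/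
def IsProV (V : Pseudovariety) (S : TopSgr) : Prop :=
  CompactSpace S.carrier ∧ T2Space S.carrier ∧ ContinuousMul S.carrier ∧
    ∀ x y : S.carrier, x ≠ y → ∃ (F : SgrIn V) (f : S.carrier →ₙ* F.carrier),
      ContinuousDisc ⇑f ∧ f x ≠ f y

/-- A profinite semigroup: a compact Hausdorff totally disconnected topological semigroup. -/
def IsProfiniteSgr (S : TopSgr) : Prop :=
  CompactSpace S.carrier ∧ T2Space S.carrier ∧ TotallyDisconnectedSpace S.carrier ∧
    ContinuousMul S.carrier

/-- `C`, together with the continuous homomorphisms `φ i`, is a `V`-coproduct of the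
family `S` of pro-`V` semigroups. -/
structure IsCoproduct (V : Pseudovariety) {I : Type} (S : I → TopSgr)
    (C : TopSgr) (φ : ∀ i, (S i).carrier →ₙ* C.carrier) : Prop where
  proV : IsProV V C
  cont : ∀ i, Continuous ⇑(φ i)
  universal : ∀ (T : TopSgr), IsProV V T →
    ∀ ψ : ∀ i, (S i).carrier →ₙ* T.carrier, (∀ i, Continuous ⇑(ψ i)) →
      ∃! Ψ : C.carrier →ₙ* T.carrier, Continuous ⇑Ψ ∧ ∀ i, Ψ.comp (φ i) = ψ i

/-- `P`, together with the homomorphisms `e i`, is a free product (coproduct in the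
category of semigroups) of the family `S`. -/
structure IsFreeProduct {I : Type} (S : I → Type) [∀ i, Semigroup (S i)]
    (P : Type) [Semigroup P] (e : ∀ i, S i →ₙ* P) : Prop where
  universal : ∀ (T : Type) [Semigroup T] (f : ∀ i, S i →ₙ* T),
    ∃! F : P →ₙ* T, ∀ i, F.comp (e i) = f i

/-! ### Particular pseudovarieties and related notions -/

/-- `V` contains the pseudovariety `Sl` of finite semilattices. -/
def ContainsSl (V : Pseudovariety) : Prop :=
  ∀ (S : Type) [Semigroup S] [Finite S],
    (∀ x y : S, x * y = y * x) → (∀ x : S, x * x = x) → V.Mem S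

/-- Green's `J`-preorder: `s ≤_J t`, i.e. `s ∈ S^I t S^I`. -/
def JBelow {S : Type} [Semigroup S] (s t : S) : Prop :=
  ∃ x y : WithOne S, x * (t : WithOne S) * y = (s : WithOne S)

/-- `V` contains the pseudovariety `J` of finite `J`-trivial semigroups. -/
def ContainsJ (V : Pseudovariety) : Prop :=
  ∀ (S : Type) [Semigroup S] [Finite S],
    (∀ s t : S, JBelow s t → JBelow t s → s = t) → V.Mem S

/-- The preimage of an idempotent under a semigroup homomorphism, as a subsemigroup. -/
def fiberSub {S T : Type} [Semigroup S] [Semigroup T] (ψ : S →ₙ* T) (e : T)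
    (he : e * e = e) : Subsemigroup S where
  carrier := ⇑ψ ⁻¹' {e}
  mul_mem' := by
    intro a b ha hb
    simp only [Set.mem_preimage, Set.mem_singleton_iff] at *
    rw [map_mul, ha, hb, he]

/-- The set of products of `n+1` elements of a semigroup (so `nthProds S 0 = S`). -/
def nthProds (S : Type) [Semigroup S] : ℕ → Set S
  | 0 => Set.univ
  | n + 1 => {x | ∃ a y, y ∈ nthProds S n ∧ x = a * y}

/-- A nilpotent semigroup: it has a zero `z` and some power of the semigroup is `{z}`. -/
def IsNilpotentSgr (S : Type) [Semigroup S] : Prop :=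
  ∃ z : S, (∀ x : S, z * x = z ∧ x * z = z) ∧ ∃ n : ℕ, nthProds S n ⊆ {z}

/-- A generator of the Mal'cev product `N ⓜ V`: a finite semigroup admitting a surjective
homomorphism onto a member of `V` all of whose idempotent fibers are nilpotent. -/
def NMalcevGen (V : Pseudovariety) (S : Type) [Semigroup S] : Prop :=
  Finite S ∧ ∃ (T : SgrIn V) (ψ : S →ₙ* T.carrier), Function.Surjective ψ ∧
    ∀ (e : T.carrier) (he : e * e = e), IsNilpotentSgr (fiberSub ψ e he)

/-- The equality `N ⓜ V = V`: `V` coincides with the smallest pseudovariety containing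
all finite semigroups admitting an `N`-morphism onto some member of `V`. -/
def NMalcevFixed (V : Pseudovariety) : Prop :=
  ∀ (S : Type) [Semigroup S] [Finite S],
    V.Mem S ↔ ∀ U : Pseudovariety,
      (∀ (S' : Type) [Semigroup S'], NMalcevGen V S' → U.Mem S') → U.Mem S

/-- A completely simple semigroup: simple with a primitive idempotent. -/
def IsCompletelySimple (S : Type) [Semigroup S] : Prop :=
  (∀ J : Set S, J.Nonempty → (∀ s x : S, x ∈ J → s * x ∈ J ∧ x * s ∈ J) → J = Set.univ) ∧
  ∃ e : S, e * e = e ∧ ∀ f : S, f * f = f → e * f = f → f * e = f → f = e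

/-- An equidivisible semigroup. -/
def Equidivisible (S : Type) [Semigroup S] : Prop :=
  ∀ u v x y : S, u * v = x * y →
    ∃ t : WithOne S,
      ((x : WithOne S) = (u : WithOne S) * t ∧ t * (y : WithOne S) = (v : WithOne S)) ∨
      ((x : WithOne S) * t = (u : WithOne S) ∧ (y : WithOne S) = t * (v : WithOne S))

/-! ### The two-sided Karnofsky–Rhodes expansion -/

/-- Vertices of the two-sided Cayley graph of `T`: pairs of elements of `T^I`. -/
abbrev KRVtx (T : Type) : Type := WithOne T × WithOne T

/-- Edges of the two-sided Cayley graph: (source, label, target). -/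
abbrev KREdge (A T : Type) : Type := KRVtx T × A × KRVtx T

/-- The image in `T^I` of a letter. -/
def letterImg {A T : Type} [Semigroup T] (ψ : FreeSemigroup A →ₙ* T) (a : A) : WithOne T :=
  (ψ (FreeSemigroup.of a) : WithOne T)

/-- The image in `T^I` of a (possibly empty) word. -/
def wordImg {A T : Type} [Semigroup T] (ψ : FreeSemigroup A →ₙ* T) (w : List A) : WithOne T :=
  (w.map (letterImg ψ)).prod

/-- `e` is an edge of the two-sided Cayley graph `Γ_ψ`. -/
def IsKREdge {A T : Type} [Semigroup T] (ψ : FreeSemigroup A →ₙ* T) (e : KREdge A T) : Prop :=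
  e.1.1 * letterImg ψ e.2.1 = e.2.2.1 ∧ e.1.2 = letterImg ψ e.2.1 * e.2.2.2

/-- One step along an edge of `Γ_ψ` (used to define directed paths). -/
def KRStep {A T : Type} [Semigroup T] (ψ : FreeSemigroup A →ₙ* T) (v w : KRVtx T) : Prop :=
  ∃ a : A, v.1 * letterImg ψ a = w.1 ∧ v.2 = letterImg ψ a * w.2

/-- A transition edge of `Γ_ψ`: an edge from whose target there is no directed path
back to its source. -/
def IsTransEdge {A T : Type} [Semigroup T] (ψ : FreeSemigroup A →ₙ* T) (e : KREdge A T) : Prop :=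
  IsKREdge ψ e ∧ ¬ Relation.ReflTransGen (KRStep ψ) e.2.2 e.1

/-- The list of letters of an element of the free semigroup. -/
def letters {A : Type} (u : FreeSemigroup A) : List A := u.head :: u.tail

/-- The set of edges of the path `p_u` of `Γ_ψ` from `(I, ψ u)` to `(ψ u, I)` labeled by `u`. -/
def pathEdges {A T : Type} [Semigroup T] (ψ : FreeSemigroup A →ₙ* T) (u : FreeSemigroup A) :
    Set (KREdge A T) :=
  {e | ∃ (w₁ w₂ : List A) (a : A), letters u = w₁ ++ a :: w₂ ∧
    e = ((wordImg ψ w₁, wordImg ψ (a :: w₂)), a, (wordImg ψ (w₁ ++ [a]), wordImg ψ w₂))}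

/-- The set `T(p_u)` of transition edges of `Γ_ψ` occurring in the path `p_u`. -/
def transEdges {A T : Type} [Semigroup T] (ψ : FreeSemigroup A →ₙ* T) (u : FreeSemigroup A) :
    Set (KREdge A T) :=
  {e ∈ pathEdges ψ u | IsTransEdge ψ e}

/-- A realization of the two-sided Karnofsky–Rhodes expansion of `ψ : A⁺ → T`:
a semigroup `K = T_ψ^KR` together with the projection `ψ^KR : A⁺ → K`, which is onto and
identifies `u` and `v` exactly when `ψ u = ψ v` and `T(p_u) = T(p_v)`, and the canonical
homomorphism `π : T_ψ^KR → T` with `π ∘ ψ^KR = ψ`. -/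
structure KRExp {A T : Type} [Semigroup T] (ψ : FreeSemigroup A →ₙ* T) : Type 1 where
  K : Type
  [strK : Semigroup K]
  [finK : Finite K]
  ψKR : FreeSemigroup A →ₙ* K
  π : K →ₙ* T
  surj : Function.Surjective ⇑ψKR
  ker : ∀ u v : FreeSemigroup A, ψKR u = ψKR v ↔
    (ψ u = ψ v ∧ transEdges ψ u = transEdges ψ v)
  proj : π.comp ψKR = ψ

attribute [instance] KRExp.strK KRExp.finK

/-- The data of a two-sided Karnofsky–Rhodes expansion of a finite semigroup `T`:
a finite alphabet `A`, an onto homomorphism `ψ : A⁺ → T`, and a realization `T_ψ^KR`. -/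
structure KRData (T : Type) [Semigroup T] : Type 1 where
  A : Type
  [finA : Finite A]
  ψ : FreeSemigroup A →ₙ* T
  surjψ : Function.Surjective ⇑ψ
  E : KRExp ψ

attribute [instance] KRData.finA

/-- `V` is closed under two-sided Karnofsky–Rhodes expansion. -/
def ClosedUnderKR (V : Pseudovariety) : Prop :=
  ∀ (A T : Type) [Finite A] [Semigroup T], V.Mem T →
    ∀ (ψ : FreeSemigroup A →ₙ* T), Function.Surjective ⇑ψ →
      ∀ E : KRExp ψ, V.Mem E.K

/-! ### KR-covers -/

/-- `S` is a KR-cover of the finite semigroup `T`. -/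
def IsKRCoverOf (S : TopSgr) (T : Type) [Semigroup T] [Finite T] : Prop :=
  (∃ φ : S.carrier →ₙ* T, ContinuousDisc ⇑φ ∧ Function.Surjective ⇑φ) ∧
  ∀ φ : S.carrier →ₙ* T, ContinuousDisc ⇑φ → Function.Surjective ⇑φ →
    ∃ (D : KRData T) (φψ : S.carrier →ₙ* D.E.K),
      ContinuousDisc ⇑φψ ∧ D.E.π.comp φψ = φ

/-- `S` is a KR-cover: a KR-cover of each of its finite continuous homomorphic images. -/
def IsKRCover (S : TopSgr) : Prop :=
  ∀ (T : Type) [Semigroup T] [Finite T],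
    (∃ φ : S.carrier →ₙ* T, ContinuousDisc ⇑φ ∧ Function.Surjective ⇑φ) →
    IsKRCoverOf S T

/-- `S` is `V`-projective. -/
def IsVProjective (V : Pseudovariety) (S : TopSgr) : Prop :=
  IsProV V S ∧ ∀ (T R : TopSgr), IsProV V T → IsProV V R →
    ∀ (f : S.carrier →ₙ* T.carrier) (g : R.carrier →ₙ* T.carrier),
      Continuous ⇑f → Continuous ⇑g → Function.Surjective ⇑g →
        ∃ f' : S.carrier →ₙ* R.carrier, Continuous ⇑f' ∧ g.comp f' = f

/-! ### Strong KR-covers and letter super-cancellativity -/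

/-- `κ : A → S` is a generating mapping: its image generates a dense subsemigroup. -/
def GeneratingMap {A : Type} (S : TopSgr) (κ : A → S.carrier) : Prop :=
  Dense (Subsemigroup.closure (Set.range κ) : Set S.carrier)

/-- The homomorphism `A⁺ → T` extending `a ↦ φ (κ a)`. -/
def liftGen {A : Type} (S : TopSgr) (κ : A → S.carrier) {T : Type} [Semigroup T]
    (φ : S.carrier →ₙ* T) : FreeSemigroup A →ₙ* T :=
  FreeSemigroup.lift (fun a => φ (κ a))

/-- `S` is a strong KR-cover of the finite semigroup `T` with respect to the
generating mapping `κ`. -/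
def IsStrongKRCoverOfWrt {A : Type} (S : TopSgr) (κ : A → S.carrier)
    (T : Type) [Semigroup T] [Finite T] : Prop :=
  ∀ φ : S.carrier →ₙ* T, ContinuousDisc ⇑φ → Function.Surjective ⇑φ →
    ∃ (E : KRExp (liftGen S κ φ)) (φκ : S.carrier →ₙ* E.K),
      ContinuousDisc ⇑φκ ∧ E.π.comp φκ = φ ∧
      ∀ a : A, φκ (κ a) = E.ψKR (FreeSemigroup.of a)

/-- `S` is a strong KR-cover of the finite semigroup `T` (with respect to some
generating mapping with finite domain). -/
def IsStrongKRCoverOf (S : TopSgr) (T : Type) [Semigroup T] [Finite T] : Prop :=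
  ∃ A : Type, Finite A ∧ ∃ κ : A → S.carrier, GeneratingMap S κ ∧
    IsStrongKRCoverOfWrt S κ T

/-- `S` is a strong KR-cover: a strong KR-cover of each of its finite continuous
homomorphic images. -/
def IsStrongKRCover (S : TopSgr) : Prop :=
  ∀ (T : Type) [Semigroup T] [Finite T],
    (∃ φ : S.carrier →ₙ* T, ContinuousDisc ⇑φ ∧ Function.Surjective ⇑φ) →
    IsStrongKRCoverOf S T

/-- `S` is letter super-cancellative with respect to the subset `A` of `S`. -/
def IsLSC (S : TopSgr) (A : Set S.carrier) : Prop :=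
  ∀ a ∈ A, ∀ b ∈ A, ∀ u v : WithOne S.carrier,
    (u * (a : WithOne S.carrier) = v * (b : WithOne S.carrier) → a = b ∧ u = v) ∧
    ((a : WithOne S.carrier) * u = (b : WithOne S.carrier) * v → a = b ∧ u = v)

/-! ### `S^I` and inverse limits -/

/-- The sum topology on `S^I = S ∪ {I}`: the point `I` is isolated and `S` keeps
its topology. -/
def withOneTopology (S : Type) [TopologicalSpace S] : TopologicalSpace (WithOne S) where
  IsOpen V := IsOpen ((fun s : S => (s : WithOne S)) ⁻¹' V)
  isOpen_univ := by simp
  isOpen_inter := by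
    intro U V hU hV
    rw [Set.preimage_inter]
    exact hU.inter hV
  isOpen_sUnion := by
    intro s hs
    rw [Set.preimage_sUnion]
    exact isOpen_biUnion hs

/-- `S^I` as a topological semigroup (in fact a monoid): `S` with an isolated identity
adjoined. -/
def withOneTopSgr (S : TopSgr) : TopSgr :=
  @TopSgr.mk (WithOne S.carrier) _ (withOneTopology S.carrier)

/-- The inverse limit of a family of topological semigroups, as a subsemigroup of
the product. -/
def invLimSub {I : Type} [Preorder I] (S : I → TopSgr)
    (f : ∀ i j, j ≤ i → ((S i).carrier →ₙ* (S j).carrier)) :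
    Subsemigroup (∀ i, (S i).carrier) where
  carrier := {x | ∀ i j (h : j ≤ i), f i j h (x i) = x j}
  mul_mem' := by
    intro a b ha hb i j h
    simp only [Pi.mul_apply, map_mul, ha i j h, hb i j h]

/-- The inverse limit as a topological semigroup (with the topology induced from the
product topology). -/
def invLimTopSgr {I : Type} [Preorder I] (S : I → TopSgr)
    (f : ∀ i j, j ≤ i → ((S i).carrier →ₙ* (S j).carrier)) : TopSgr :=
  TopSgr.mk (invLimSub S f)

namespace RetrJ

variable {U : Type} [Semigroup U]

def pw (c : U) : ℕ → U
  | 0 => c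
  | n + 1 => pw c n * c

lemma pw_succ (c : U) (n : ℕ) : pw c (n + 1) = pw c n * c := rfl

lemma pw_comm (c : U) (n : ℕ) : c * pw c n = pw c n * c := by
  induction n with
  | zero => rfl
  | succ n ih => rw [pw_succ, ← mul_assoc, ih]

lemma pw_succ' (c : U) (n : ℕ) : pw c (n + 1) = c * pw c n := by
  rw [pw_succ, ← pw_comm]

lemma pw_add (c : U) (m n : ℕ) : pw c (m + n + 1) = pw c m * pw c n := by
  induction n with
  | zero => rfl
  | succ n ih =>
    rw [show m + (n + 1) + 1 = (m + n + 1) + 1 from rfl, pw_succ, ih, pw_succ, mul_assoc]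

lemma pw_mem {A : Set U} (hA : ∀ a ∈ A, ∀ b ∈ A, a * b ∈ A) {c : U} (hc : c ∈ A) :
    ∀ n, pw c n ∈ A
  | 0 => hc
  | n + 1 => hA _ (pw_mem hA hc n) _ hc

lemma pw_coe {V : Type} [Semigroup V] (c : V) (n : ℕ) :
    ((pw c n : V) : WithOne V) = (c : WithOne V) ^ (n + 1) := by
  induction n with
  | zero => simp [pw]
  | succ n ih => rw [pw_succ, WithOne.coe_mul, ih, ← pow_succ]

lemma exists_idem_pw [Finite U] (c : U) : ∃ m, pw c m * pw c m = pw c m := by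
  obtain ⟨i, j, hij, hpow⟩ : ∃ i j, i < j ∧ pw c i = pw c j := by
    obtain ⟨i, j, hne, h⟩ := Finite.exists_ne_map_eq_of_infinite (pw c)
    rcases lt_or_gt_of_ne hne with h' | h'
    · exact ⟨i, j, h', h⟩
    · exact ⟨j, i, h', h.symm⟩
  set p := j - i with hp
  have hp1 : 1 ≤ p := by omega
  have hip : i + p = j := by omega
  have hstep : ∀ n, i ≤ n → pw c (n + p) = pw c n := by
    intro n hn
    obtain ⟨d, rfl⟩ := Nat.exists_eq_add_of_le hn
    rcases d with _ | d'
    · rw [Nat.add_zero, hip, hpow]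
    · have e1 : i + (d' + 1) + p = j + d' + 1 := by omega
      rw [e1, pw_add, ← hpow, ← pw_add]
      rfl
  have hmult : ∀ t n, i ≤ n → pw c (n + t * p) = pw c n := by
    intro t
    induction t with
    | zero => intro n _; simp
    | succ t ih =>
      intro n hn
      have e : n + (t + 1) * p = (n + t * p) + p := by ring
      rw [e, hstep _ (by omega), ih n hn]
  refine ⟨(i + 1) * p - 1, ?_⟩
  set M := (i + 1) * p - 1 with hM
  have h1 : 1 ≤ (i + 1) * p := by nlinarith
  have h2 : M + M + 1 = M + (i + 1) * p := by omega
  have hiM : i ≤ M := by nlinarith [hM]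
  calc pw c M * pw c M = pw c (M + M + 1) := (pw_add c M M).symm
    _ = pw c (M + (i + 1) * p) := by rw [h2]
    _ = pw c M := hmult (i + 1) M hiM

lemma stab_r [Finite U] {A : Set U} (hA : ∀ a ∈ A, ∀ b ∈ A, a * b ∈ A)
    {a b x y : U} (hb : b ∈ A) (hy : y ∈ A)
    (h : x * (a * b) * y = a) : ∃ z ∈ A, a * b * z = a := by
  set c := b * y with hc
  have key : ∀ n, pw x n * a * pw c n = a := by
    intro n
    induction n with
    | zero =>
      show x * a * c = a
      rw [hc]
      simpa only [mul_assoc] using h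
    | succ n ih =>
      rw [pw_succ' x n, pw_succ c n, show x * pw x n * a * (pw c n * c)
          = x * (pw x n * a * pw c n) * c by simp only [mul_assoc], ih]
      show x * a * c = a
      rw [hc]
      simpa only [mul_assoc] using h
  obtain ⟨m, hm⟩ := exists_idem_pw c
  have ha2 : a * pw c m = a := by
    calc a * pw c m = (pw x m * a * pw c m) * pw c m := by rw [key m]
      _ = pw x m * a * (pw c m * pw c m) := by simp only [mul_assoc]
      _ = pw x m * a * pw c m := by rw [hm]
      _ = a := key m
  rcases m with _ | n
  · exact ⟨y, hy, by rw [mul_assoc]; exact ha2⟩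
  · refine ⟨y * pw c n, hA _ hy _ (pw_mem hA (hA _ hb _ hy) n), ?_⟩
    have h3 : pw c (n + 1) = b * (y * pw c n) := by
      rw [pw_succ', hc, mul_assoc]
    calc a * b * (y * pw c n) = a * pw c (n + 1) := by rw [h3, mul_assoc]
      _ = a := ha2

lemma stab_l [Finite U] {A : Set U} (hA : ∀ a ∈ A, ∀ b ∈ A, a * b ∈ A)
    {a b x y : U} (hb : b ∈ A) (hx : x ∈ A)
    (h : x * (b * a) * y = a) : ∃ z ∈ A, z * b * a = a := by
  set c := x * b with hc
  have key : ∀ n, pw c n * a * pw y n = a := by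
    intro n
    induction n with
    | zero =>
      show c * a * y = a
      rw [hc]
      simpa only [mul_assoc] using h
    | succ n ih =>
      rw [pw_succ' c n, pw_succ y n, show c * pw c n * a * (pw y n * y)
          = c * (pw c n * a * pw y n) * y by simp only [mul_assoc], ih]
      show c * a * y = a
      rw [hc]
      simpa only [mul_assoc] using h
  obtain ⟨m, hm⟩ := exists_idem_pw c
  have ha2 : pw c m * a = a := by
    calc pw c m * a = pw c m * (pw c m * a * pw y m) := by rw [key m]
      _ = (pw c m * pw c m) * a * pw y m := by simp only [mul_assoc]
      _ = pw c m * a * pw y m := by rw [hm]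
      _ = a := key m
  rcases m with _ | n
  · exact ⟨x, hx, ha2⟩
  · refine ⟨pw c n * x, hA _ (pw_mem hA (hA _ hx _ hb) n) _ hx, ?_⟩
    have h3 : pw c (n + 1) = pw c n * x * b := by
      rw [pw_succ, hc, mul_assoc]
    calc pw c n * x * b * a = pw c (n + 1) * a := by rw [h3]
      _ = a := ha2

end RetrJ

namespace RetrJ

lemma idem_of_aperiodic_pw {U : Type} [Semigroup U] {g z : U} {n : ℕ}
    (hper : pw g n = pw g (n + 1)) (hz : g * pw g n * z = g) : g * g = g := by
  have h1 : g * pw g n = pw g (n + 1) := (pw_succ' g n).symm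
  have hg : pw g (n + 1) * z = g := by rw [← h1]; exact hz
  have h2 : g * pw g (n + 1) = pw g (n + 2) := (pw_succ' g (n + 1)).symm
  have h3 : pw g (n + 2) = pw g (n + 1) := by
    calc pw g (n + 2) = pw g (n + 1) * g := pw_succ g (n + 1)
      _ = pw g n * g := by rw [← hper]
      _ = pw g (n + 1) := (pw_succ g n).symm
  calc g * g = g * (pw g (n + 1) * z) := by rw [hg]
    _ = (g * pw g (n + 1)) * z := (mul_assoc _ _ _).symm
    _ = pw g (n + 2) * z := by rw [h2]
    _ = pw g (n + 1) * z := by rw [h3]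
    _ = g := hg

end RetrJ

namespace RetrJ

lemma finWithOne {V : Type} [Finite V] : Finite (WithOne V) := by
  have := Fintype.ofFinite V
  exact Finite.of_equiv (Option V) (Equiv.refl _)

lemma jb_refl {V : Type} [Semigroup V] (s : V) : JBelow s s := ⟨1, 1, by simp⟩

lemma jb_trans {V : Type} [Semigroup V] {s t r : V} (h1 : JBelow s t) (h2 : JBelow t r) :
    JBelow s r := by
  obtain ⟨x, y, hxy⟩ := h1
  obtain ⟨x', y', hxy'⟩ := h2
  refine ⟨x * x', y' * y, ?_⟩
  rw [← hxy, ← hxy']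
  simp only [mul_assoc]

lemma exists_coe_mul {V : Type} [Semigroup V] (x : WithOne V) (e f : V) :
    ∃ u : V, (u : WithOne V) = (e : WithOne V) * x * f := by
  induction x using WithOne.recOneCoe with
  | one => exact ⟨e * f, by simp⟩
  | coe x₀ => exact ⟨e * x₀ * f, by simp [mul_assoc]⟩

end RetrJ

open RetrJ

/-- An onto homomorphism of finite semigroups with aperiodic idempotent
fibers restricts to an isomorphism from some subsemigroup onto any `J`-class that is a
subsemigroup. -/
theorem retraction_onto_Jclass {S T : Type} [Semigroup S] [Finite S]
    [Semigroup T] [Finite T] (π : S →ₙ* T) (hsurj : Function.Surjective ⇑π)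
    (hap : ∀ e : T, e * e = e → ∀ x : S, π x = e →
      ∃ n : ℕ, 0 < n ∧ (x : WithOne S) ^ n = (x : WithOne S) ^ (n + 1))
    (K : Set T) (t₀ : T) (hK : K = {s | JBelow s t₀ ∧ JBelow t₀ s})
    (hsub : ∀ a ∈ K, ∀ b ∈ K, a * b ∈ K) :
    ∃ K' : Subsemigroup S, Set.BijOn ⇑π (K' : Set S) K := by
  classical
  haveI : Finite (WithOne T) := finWithOne
  have hKiff : ∀ s : T, s ∈ K ↔ JBelow s t₀ ∧ JBelow t₀ s := by
    intro s; rw [hK]; exact Iff.rfl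
  have hJle : ∀ j ∈ K, ∀ k ∈ K,
      ∃ x y : WithOne T, x * (j : WithOne T) * y = (k : WithOne T) := by
    intro j hj k hk
    exact jb_trans ((hKiff k).1 hk).1 ((hKiff j).1 hj).2
  -- local units in K
  have unitK : ∀ k ∈ K, ∃ e ∈ K, e * e = e ∧ e * k = k ∧ k * e = k := by
    intro k hk
    obtain ⟨m, hm⟩ := exists_idem_pw (U := T) k
    rcases m with _ | n
    · exact ⟨k, hk, hm, hm, hm⟩
    · have heK : pw k (n + 1) ∈ K := pw_mem hsub hk (n + 1)
      have hee : pw k (n + 1) * pw k (n + 1) = pw k (n + 1) := hm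
      obtain ⟨x, y, hxy⟩ := hJle (pw k (n + 1)) heK k hk
      have hsplit1 : ((pw k (n + 1) : T) : WithOne T)
          = (k : WithOne T) * ((pw k n : T) : WithOne T) := by
        rw [pw_succ', WithOne.coe_mul]
      have hsplit2 : ((pw k (n + 1) : T) : WithOne T)
          = ((pw k n : T) : WithOne T) * (k : WithOne T) := by
        rw [pw_succ, WithOne.coe_mul]
      have hek : pw k (n + 1) * k = k := by
        have h1 : x * ((k : WithOne T) * ((pw k n : T) : WithOne T)) * y = (k : WithOne T) := by
          rw [← hsplit1]; exact hxy
        obtain ⟨z, _, hz⟩ := stab_r (A := (Set.univ : Set (WithOne T)))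
          (fun _ _ _ _ => trivial) trivial trivial h1
        have hez : ((pw k (n + 1) : T) : WithOne T) * z = (k : WithOne T) := by
          rw [hsplit1]; exact hz
        have hfin : ((pw k (n + 1) : T) : WithOne T) * (k : WithOne T) = (k : WithOne T) := by
          calc ((pw k (n + 1) : T) : WithOne T) * (k : WithOne T)
              = ((pw k (n + 1) : T) : WithOne T) * (((pw k (n + 1) : T) : WithOne T) * z) := by
                rw [hez]
            _ = (((pw k (n + 1) : T) : WithOne T) * ((pw k (n + 1) : T) : WithOne T)) * z :=
                (mul_assoc _ _ _).symm
            _ = ((pw k (n + 1) : T) : WithOne T) * z := by rw [← WithOne.coe_mul, hee]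
            _ = (k : WithOne T) := hez
        exact WithOne.coe_inj.1 (by rw [WithOne.coe_mul]; exact hfin)
      have hke : k * pw k (n + 1) = k := by
        have h1 : x * (((pw k n : T) : WithOne T) * (k : WithOne T)) * y = (k : WithOne T) := by
          rw [← hsplit2]; exact hxy
        obtain ⟨z, _, hz⟩ := stab_l (A := (Set.univ : Set (WithOne T)))
          (fun _ _ _ _ => trivial) trivial trivial h1
        have hez : z * ((pw k (n + 1) : T) : WithOne T) = (k : WithOne T) := by
          rw [hsplit2, ← mul_assoc]; exact hz
        have hfin : (k : WithOne T) * ((pw k (n + 1) : T) : WithOne T) = (k : WithOne T) := by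
          calc (k : WithOne T) * ((pw k (n + 1) : T) : WithOne T)
              = (z * ((pw k (n + 1) : T) : WithOne T)) * ((pw k (n + 1) : T) : WithOne T) := by
                rw [hez]
            _ = z * (((pw k (n + 1) : T) : WithOne T) * ((pw k (n + 1) : T) : WithOne T)) :=
                mul_assoc _ _ _
            _ = z * ((pw k (n + 1) : T) : WithOne T) := by rw [← WithOne.coe_mul, hee]
            _ = (k : WithOne T) := hez
        exact WithOne.coe_inj.1 (by rw [WithOne.coe_mul]; exact hfin)
      exact ⟨pw k (n + 1), heK, hee, hek, hke⟩
  -- K is a simple semigroup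
  have simpleK : ∀ j ∈ K, ∀ k ∈ K, ∃ u ∈ K, ∃ v ∈ K, u * j * v = k := by
    intro j hj k hk
    obtain ⟨e, heK, _, hek, hke⟩ := unitK k hk
    obtain ⟨f, hfK, _, hfj, hjf⟩ := unitK j hj
    obtain ⟨x, y, hxy⟩ := hJle j hj k hk
    obtain ⟨u, hu⟩ := exists_coe_mul x e f
    obtain ⟨v, hv⟩ := exists_coe_mul y f e
    have hfj' : (f : WithOne T) * (j : WithOne T) = (j : WithOne T) := by
      rw [← WithOne.coe_mul, hfj]
    have hjf' : (j : WithOne T) * (f : WithOne T) = (j : WithOne T) := by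
      rw [← WithOne.coe_mul, hjf]
    have hcalc : (u : WithOne T) * (j : WithOne T) * (v : WithOne T) = (k : WithOne T) := by
      rw [hu, hv]
      have s1 : (f : WithOne T) * ((j : WithOne T) * ((f : WithOne T) * (y * (e : WithOne T))))
          = (j : WithOne T) * (y * (e : WithOne T)) := by
        rw [← mul_assoc, hfj', ← mul_assoc, hjf']
      calc (e : WithOne T) * x * (f : WithOne T) * (j : WithOne T)
            * ((f : WithOne T) * y * (e : WithOne T))
          = (e : WithOne T) * (x * ((f : WithOne T)
            * ((j : WithOne T) * ((f : WithOne T) * (y * (e : WithOne T)))))) := by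
            simp only [mul_assoc]
        _ = (e : WithOne T) * (x * ((j : WithOne T) * (y * (e : WithOne T)))) := by rw [s1]
        _ = (e : WithOne T) * (x * (j : WithOne T) * y) * (e : WithOne T) := by
            simp only [mul_assoc]
        _ = (e : WithOne T) * (k : WithOne T) * (e : WithOne T) := by rw [hxy]
        _ = (k : WithOne T) := by
            rw [← WithOne.coe_mul, hek, ← WithOne.coe_mul, hke]
    have huK : u ∈ K := by
      refine (hKiff u).2 ⟨?_, ?_⟩
      · refine jb_trans ?_ ((hKiff f).1 hfK).1
        exact ⟨(e : WithOne T) * x, 1, by rw [mul_one]; exact hu.symm⟩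
      · refine jb_trans ((hKiff k).1 hk).2 ?_
        exact ⟨1, (j : WithOne T) * (v : WithOne T), by rw [one_mul, ← mul_assoc]; exact hcalc⟩
    have hvK : v ∈ K := by
      refine (hKiff v).2 ⟨?_, ?_⟩
      · refine jb_trans ?_ ((hKiff e).1 heK).1
        exact ⟨(f : WithOne T) * y, 1, by rw [mul_one]; exact hv.symm⟩
      · refine jb_trans ((hKiff k).1 hk).2 ?_
        exact ⟨(u : WithOne T) * (j : WithOne T), 1, by rw [mul_one]; exact hcalc⟩
    refine ⟨u, huK, v, hvK, ?_⟩
    exact WithOne.coe_inj.1 (by rw [WithOne.coe_mul, WithOne.coe_mul]; exact hcalc)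
  -- a minimal subsemigroup of S mapping onto K
  have hne : {n : ℕ | ∃ A : Set S,
      (∀ a ∈ A, ∀ b ∈ A, a * b ∈ A) ∧ ⇑π '' A = K ∧ A.ncard = n}.Nonempty := by
    refine ⟨(⇑π ⁻¹' K).ncard, ⇑π ⁻¹' K, ?_, ?_, rfl⟩
    · intro a ha b hb
      simp only [Set.mem_preimage, map_mul]
      exact hsub _ ha _ hb
    · exact Set.image_preimage_eq K hsurj
  obtain ⟨S₀, hcl, himg, hcard⟩ := Nat.sInf_mem hne
  have hmin : ∀ B, B ⊆ S₀ → (∀ a ∈ B, ∀ b ∈ B, a * b ∈ B) → ⇑π '' B = K → B = S₀ := by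
    intro B hBA hclB himgB
    have h1 : sInf {n : ℕ | ∃ A : Set S,
        (∀ a ∈ A, ∀ b ∈ A, a * b ∈ A) ∧ ⇑π '' A = K ∧ A.ncard = n} ≤ B.ncard :=
      Nat.sInf_le ⟨B, hclB, himgB, rfl⟩
    exact Set.eq_of_subset_of_ncard_le hBA (hcard.le.trans h1) (Set.toFinite _)
  have hmemK : ∀ x ∈ S₀, π x ∈ K := by
    intro x hx; rw [← himg]; exact ⟨x, hx, rfl⟩
  have hlift : ∀ k ∈ K, ∃ x ∈ S₀, π x = k := by
    intro k hk
    rw [← himg] at hk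
    obtain ⟨x, hx, hxk⟩ := hk
    exact ⟨x, hx, hxk⟩
  -- S₀ is simple
  have simple₀ : ∀ a ∈ S₀, ∀ b ∈ S₀, ∃ u ∈ S₀, ∃ v ∈ S₀, u * b * v = a := by
    intro a ha b hb
    have hBsub : {x : S | ∃ u ∈ S₀, ∃ v ∈ S₀, x = u * b * v} ⊆ S₀ := by
      rintro x ⟨u, hu, v, hv, rfl⟩
      exact hcl _ (hcl _ hu _ hb) _ hv
    have hclB : ∀ x ∈ {x : S | ∃ u ∈ S₀, ∃ v ∈ S₀, x = u * b * v},
        ∀ y ∈ {x : S | ∃ u ∈ S₀, ∃ v ∈ S₀, x = u * b * v}, x * y ∈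
        {x : S | ∃ u ∈ S₀, ∃ v ∈ S₀, x = u * b * v} := by
      rintro x ⟨u, hu, v, hv, rfl⟩ y ⟨u', hu', v', hv', rfl⟩
      refine ⟨u, hu, v * (u' * b * v'), hcl _ hv _ (hcl _ (hcl _ hu' _ hb) _ hv'), ?_⟩
      simp only [mul_assoc]
    have himgB : ⇑π '' {x : S | ∃ u ∈ S₀, ∃ v ∈ S₀, x = u * b * v} = K := by
      apply Set.Subset.antisymm
      · rintro t ⟨x, hx, rfl⟩
        exact hmemK _ (hBsub hx)
      · intro k hk
        obtain ⟨u₀, hu₀K, v₀, hv₀K, huv⟩ := simpleK (π b) (hmemK b hb) k hk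
        obtain ⟨su, hsu, hsupi⟩ := hlift u₀ hu₀K
        obtain ⟨sv, hsv, hsvpi⟩ := hlift v₀ hv₀K
        refine ⟨su * b * sv, ⟨su, hsu, sv, hsv, rfl⟩, ?_⟩
        rw [map_mul, map_mul, hsupi, hsvpi, huv]
    have hBS := hmin _ hBsub hclB himgB
    have haB : a ∈ {x : S | ∃ u ∈ S₀, ∃ v ∈ S₀, x = u * b * v} := by rw [hBS]; exact ha
    obtain ⟨u, hu, v, hv, hx⟩ := haB
    exact ⟨u, hu, v, hv, hx.symm⟩
  -- stability inside S₀
  have rstab₀ : ∀ a ∈ S₀, ∀ b ∈ S₀, ∃ z ∈ S₀, a * b * z = a := by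
    intro a ha b hb
    obtain ⟨u, hu, v, hv, huv⟩ := simple₀ a ha (a * b) (hcl _ ha _ hb)
    exact stab_r hcl hb hv huv
  have lstab₀ : ∀ a ∈ S₀, ∀ b ∈ S₀, ∃ z ∈ S₀, z * b * a = a := by
    intro a ha b hb
    obtain ⟨u, hu, v, hv, huv⟩ := simple₀ a ha (b * a) (hcl _ hb _ ha)
    exact stab_l hcl hb hu huv
  have Rsymm : ∀ x ∈ S₀, ∀ y ∈ S₀, (∃ u ∈ S₀, y * u = x) → ∃ u ∈ S₀, x * u = y := by
    intro x hx y hy h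
    obtain ⟨u, hu, hxu⟩ := h
    obtain ⟨z, hz, hyz⟩ := rstab₀ y hy u hu
    exact ⟨z, hz, by rw [← hxu]; exact hyz⟩
  have Lsymm : ∀ x ∈ S₀, ∀ y ∈ S₀, (∃ u ∈ S₀, u * y = x) → ∃ u ∈ S₀, u * x = y := by
    intro x hx y hy h
    obtain ⟨u, hu, hxu⟩ := h
    obtain ⟨z, hz, hyz⟩ := lstab₀ y hy u hu
    exact ⟨z, hz, by rw [← hxu, ← mul_assoc]; exact hyz⟩
  -- if π a = π b then a is in the R-class (and L-class) of b
  have claimR : ∀ a ∈ S₀, ∀ b ∈ S₀, π a = π b → ∃ u ∈ S₀, b * u = a := by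
    intro a ha b hb hab
    by_contra hcon
    push_neg at hcon
    have hsub₁ : {x ∈ S₀ | ¬ ∃ u ∈ S₀, b * u = x} ⊆ S₀ := fun x hx => hx.1
    have hcl₁ : ∀ x ∈ {x ∈ S₀ | ¬ ∃ u ∈ S₀, b * u = x},
        ∀ y ∈ {x ∈ S₀ | ¬ ∃ u ∈ S₀, b * u = x},
        x * y ∈ {x ∈ S₀ | ¬ ∃ u ∈ S₀, b * u = x} := by
      intro x hx y hy
      refine ⟨hcl _ hx.1 _ hy.1, ?_⟩
      rintro ⟨u, hu, hxy⟩
      obtain ⟨z, hz, hxyz⟩ := rstab₀ x hx.1 y hy.1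
      exact hx.2 ⟨u * z, hcl _ hu _ hz, by rw [← mul_assoc, hxy]; exact hxyz⟩
    have himg₁ : ⇑π '' {x ∈ S₀ | ¬ ∃ u ∈ S₀, b * u = x} = K := by
      apply Set.Subset.antisymm
      · rintro t ⟨x, hx, rfl⟩
        exact hmemK _ hx.1
      · intro k hk
        obtain ⟨x, hx, hxk⟩ := hlift k hk
        by_cases hcase : ∃ u ∈ S₀, b * u = x
        · obtain ⟨u, hu, hbu⟩ := hcase
          refine ⟨a * u, ⟨hcl _ ha _ hu, ?_⟩, ?_⟩
          · rintro ⟨w, hw, hw2⟩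
            obtain ⟨s, hs, hsa⟩ := Rsymm (a * u) (hcl _ ha _ hu) a ha ⟨u, hu, rfl⟩
            exact hcon (w * s) (hcl _ hw _ hs) (by rw [← mul_assoc, hw2]; exact hsa)
          · rw [map_mul, hab, ← map_mul, hbu, hxk]
        · exact ⟨x, ⟨hx, hcase⟩, hxk⟩
    have hS₁S₀ := hmin _ hsub₁ hcl₁ himg₁
    obtain ⟨z, hz, hbz⟩ := rstab₀ b hb b hb
    have hbS₁ : b ∈ {x ∈ S₀ | ¬ ∃ u ∈ S₀, b * u = x} := by rw [hS₁S₀]; exact hb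
    exact hbS₁.2 ⟨b * z, hcl _ hb _ hz, by rw [← mul_assoc]; exact hbz⟩
  have claimL : ∀ a ∈ S₀, ∀ b ∈ S₀, π a = π b → ∃ u ∈ S₀, u * b = a := by
    intro a ha b hb hab
    by_contra hcon
    push_neg at hcon
    have hsub₁ : {x ∈ S₀ | ¬ ∃ u ∈ S₀, u * b = x} ⊆ S₀ := fun x hx => hx.1
    have hcl₁ : ∀ x ∈ {x ∈ S₀ | ¬ ∃ u ∈ S₀, u * b = x},
        ∀ y ∈ {x ∈ S₀ | ¬ ∃ u ∈ S₀, u * b = x},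
        x * y ∈ {x ∈ S₀ | ¬ ∃ u ∈ S₀, u * b = x} := by
      intro x hx y hy
      refine ⟨hcl _ hx.1 _ hy.1, ?_⟩
      rintro ⟨u, hu, hxy⟩
      obtain ⟨z, hz, hxyz⟩ := lstab₀ y hy.1 x hx.1
      exact hy.2 ⟨z * u, hcl _ hz _ hu, by rw [mul_assoc, hxy, ← mul_assoc]; exact hxyz⟩
    have himg₁ : ⇑π '' {x ∈ S₀ | ¬ ∃ u ∈ S₀, u * b = x} = K := by
      apply Set.Subset.antisymm
      · rintro t ⟨x, hx, rfl⟩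
        exact hmemK _ hx.1
      · intro k hk
        obtain ⟨x, hx, hxk⟩ := hlift k hk
        by_cases hcase : ∃ u ∈ S₀, u * b = x
        · obtain ⟨u, hu, hbu⟩ := hcase
          refine ⟨u * a, ⟨hcl _ hu _ ha, ?_⟩, ?_⟩
          · rintro ⟨w, hw, hw2⟩
            obtain ⟨s, hs, hsa⟩ := Lsymm (u * a) (hcl _ hu _ ha) a ha ⟨u, hu, rfl⟩
            exact hcon (s * w) (hcl _ hs _ hw) (by rw [mul_assoc, hw2]; exact hsa)
          · rw [map_mul, hab, ← map_mul, hbu, hxk]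
        · exact ⟨x, ⟨hx, hcase⟩, hxk⟩
    have hS₁S₀ := hmin _ hsub₁ hcl₁ himg₁
    obtain ⟨z, hz, hbz⟩ := lstab₀ b hb b hb
    have hbS₁ : b ∈ {x ∈ S₀ | ¬ ∃ u ∈ S₀, u * b = x} := by rw [hS₁S₀]; exact hb
    exact hbS₁.2 ⟨z * b, hcl _ hz _ hb, hbz⟩
  -- injectivity of π on S₀
  have hinj : ∀ a ∈ S₀, ∀ b ∈ S₀, π a = π b → a = b := by
    intro a ha b hb hab
    obtain ⟨m, hm⟩ := exists_idem_pw (U := S) a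
    have hMe : pw a (m + m + 1) = pw a m := by rw [pw_add, hm]
    have heS : pw a (m + m + 1) ∈ S₀ := pw_mem hcl ha _
    have ha'S : pw a (m + m) ∈ S₀ := pw_mem hcl ha _
    have hee : pw a (m + m + 1) * pw a (m + m + 1) = pw a (m + m + 1) := by
      rw [hMe]; exact hm
    have haa' : a * pw a (m + m) = pw a (m + m + 1) := (pw_succ' a (m + m)).symm
    have ha'a : pw a (m + m) * a = pw a (m + m + 1) := (pw_succ a (m + m)).symm
    obtain ⟨z₁, hz₁, hz₁e⟩ := rstab₀ a ha (pw a (m + m)) ha'S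
    have haez : pw a (m + m + 1) * z₁ = a := by rw [← haa']; exact hz₁e
    have h_ea : pw a (m + m + 1) * a = a := by
      calc pw a (m + m + 1) * a = pw a (m + m + 1) * (pw a (m + m + 1) * z₁) := by rw [haez]
        _ = (pw a (m + m + 1) * pw a (m + m + 1)) * z₁ := (mul_assoc _ _ _).symm
        _ = pw a (m + m + 1) * z₁ := by rw [hee]
        _ = a := haez
    obtain ⟨z₂, hz₂, hz₂e⟩ := lstab₀ a ha (pw a (m + m)) ha'S
    have hzea : z₂ * pw a (m + m + 1) = a := by rw [← ha'a, ← mul_assoc]; exact hz₂e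
    have h_ae : a * pw a (m + m + 1) = a := by
      calc a * pw a (m + m + 1)
          = (z₂ * pw a (m + m + 1)) * pw a (m + m + 1) := by rw [hzea]
        _ = z₂ * (pw a (m + m + 1) * pw a (m + m + 1)) := mul_assoc _ _ _
        _ = z₂ * pw a (m + m + 1) := by rw [hee]
        _ = a := hzea
    have hgS : pw a (m + m) * b ∈ S₀ := hcl _ ha'S _ hb
    have hπg : π (pw a (m + m) * b) = π (pw a (m + m + 1)) := by
      rw [map_mul, ← hab, ← map_mul, ha'a]
    have hπe_idem : π (pw a (m + m + 1)) * π (pw a (m + m + 1)) = π (pw a (m + m + 1)) := by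
      rw [← map_mul, hee]
    obtain ⟨n, hn0, hgn⟩ := hap (π (pw a (m + m + 1))) hπe_idem (pw a (m + m) * b) hπg
    rcases n with _ | n'
    · exact absurd hn0 (lt_irrefl 0)
    have hper : pw (pw a (m + m) * b) n' = pw (pw a (m + m) * b) (n' + 1) := by
      apply WithOne.coe_inj.1
      rw [pw_coe, pw_coe]
      exact hgn
    obtain ⟨zg, hzg, hzge⟩ := rstab₀ (pw a (m + m) * b) hgS
      (pw (pw a (m + m) * b) n') (pw_mem hcl hgS n')
    have hgg : (pw a (m + m) * b) * (pw a (m + m) * b) = pw a (m + m) * b :=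
      idem_of_aperiodic_pw hper hzge
    obtain ⟨u', hu', hau'⟩ := claimR b hb a ha hab.symm
    obtain ⟨v', hv', hva'⟩ := claimL b hb a ha hab.symm
    have heb : pw a (m + m + 1) * b = b := by
      rw [← hau']
      calc pw a (m + m + 1) * (a * u') = (pw a (m + m + 1) * a) * u' := (mul_assoc _ _ _).symm
        _ = a * u' := by rw [h_ea]
    have hgs : ∃ s ∈ S₀, pw a (m + m) * b = a * s := by
      rcases Nat.eq_zero_or_pos m with hm0 | hmpos
      · subst hm0
        exact ⟨b, hb, rfl⟩
      · obtain ⟨d, hd⟩ : ∃ d, m + m = d + 1 := ⟨m + m - 1, by omega⟩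
        have hsplit : pw a (m + m) = a * pw a d := by rw [hd, pw_succ']
        exact ⟨pw a d * b, hcl _ (pw_mem hcl ha _) _ hb,
          by rw [hsplit, mul_assoc]⟩
    have heg : pw a (m + m + 1) * (pw a (m + m) * b) = pw a (m + m) * b := by
      obtain ⟨s, hs, hgs'⟩ := hgs
      rw [hgs', ← mul_assoc, h_ea]
    have hge : ∃ q ∈ S₀, pw a (m + m) * b = q * pw a (m + m + 1) := by
      refine ⟨pw a (m + m) * v' * z₂, hcl _ (hcl _ ha'S _ hv') _ hz₂, ?_⟩
      calc pw a (m + m) * b = pw a (m + m) * (v' * a) := by rw [hva']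
        _ = pw a (m + m) * (v' * (z₂ * pw a (m + m + 1))) := by rw [hzea]
        _ = (pw a (m + m) * v' * z₂) * pw a (m + m + 1) := by simp only [mul_assoc]
    have hqe : ∃ q ∈ S₀, q * (pw a (m + m) * b) = pw a (m + m + 1) := by
      obtain ⟨q, hq, hgq⟩ := hge
      exact Lsymm (pw a (m + m) * b) hgS (pw a (m + m + 1)) heS ⟨q, hq, hgq.symm⟩
    have hge2 : pw a (m + m + 1) * (pw a (m + m) * b) = pw a (m + m + 1) := by
      obtain ⟨q, hq, hqg⟩ := hqe
      calc pw a (m + m + 1) * (pw a (m + m) * b)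
          = (q * (pw a (m + m) * b)) * (pw a (m + m) * b) := by rw [hqg]
        _ = q * ((pw a (m + m) * b) * (pw a (m + m) * b)) := mul_assoc _ _ _
        _ = q * (pw a (m + m) * b) := by rw [hgg]
        _ = pw a (m + m + 1) := hqg
    have hgeq : pw a (m + m) * b = pw a (m + m + 1) := by rw [← heg]; exact hge2
    have hb2 : a * (pw a (m + m) * b) = b := by
      rw [← mul_assoc, haa']
      exact heb
    rw [hgeq, h_ae] at hb2
    exact hb2
  refine ⟨⟨S₀, fun {x y} hx hy => hcl x hx y hy⟩, ?_, ?_, ?_⟩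
  · exact fun x hx => hmemK x hx
  · exact fun x hx y hy h => hinj x hx y hy h
  · intro k hk
    rw [Set.mem_image] at *
    rw [show ((⟨S₀, fun {x y} hx hy => hcl x hx y hy⟩ : Subsemigroup S) : Set S) = S₀ from rfl]
    rw [← himg] at hk
    exact hk
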